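/- Let x, y ∈ Y and l ∈ ℕ be such that x_i < ∞ and y_i < ∞ for 0 < i < l, and x_i = y_i = ∞ for all i ≥ l. Then the limit lim_{n→∞} D(Fⁿ(x), Fⁿ(y)) exists; in particular (x, y) is not a scrambled pair of F. -/

import Mathlib

open Filter

noncomputable section

instance : Fact ((0:ℝ) < 1) := ⟨one_pos⟩

/-- The unit circle `𝕊 = ℝ/ℤ` (with the metric `d₀(x,y) = min{|x−y|, 1−|x−y|}`). -/
abbrev Circle1 := AddCircle (1 : ℝ)

/-- Points of the product space `Π_{i=0}^∞ X_i = 𝕊 × Π_{i≥1} (ℕ ∪ {∞})`: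
the first component is the circle coordinate `x₀`, and the second component gives
the coordinates `x_i ∈ ℕ ∪ {∞}` for `i ≥ 1`. -/
abbrev Pt := Circle1 × (ℕ+ → ℕ∞)

/-- `1/x` for `x ∈ ℕ ∪ {∞}`, with the convention `1/∞ = 0`. -/
noncomputable def einv (x : ℕ∞) : ℝ := ((x.toNat : ℕ) : ℝ)⁻¹

/-- The metric `d_i(x,y) = |1/x − 1/y|` on `ℕ ∪ {∞}` (for `i ≥ 1`). -/
noncomputable def dE (x y : ℕ∞) : ℝ := |einv x - einv y|

/-- The metric `D(x,y) = Σ_{i=0}^∞ d_i(x_i,y_i)/2^i` on the product space. -/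
noncomputable def D (x y : Pt) : ℝ :=
  dist x.1 y.1 + ∑' i : ℕ+, dE (x.2 i) (y.2 i) / 2 ^ (i : ℕ)

/-- `Y`: the set of points whose sequence of coordinates `(x_i)_{i≥1}` is a nondecreasing
sequence in `ℕ ∪ {∞}` (with `ℕ = {1,2,…}`). -/
def Y : Set Pt := {x | (∀ i, 1 ≤ x.2 i) ∧ Monotone x.2}

/-- The skew-product map `F`: `f₀(x) = (x₀ + Σ_{i≥1} 2^{−i}·(1/x_i)) mod 1` and
`f_i(x) = x_i + 1` for `i ≥ 1`, with `∞ + 1 = ∞`. -/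
noncomputable def F (x : Pt) : Pt :=
  (x.1 + (((∑' i : ℕ+, (1 / 2 ^ (i : ℕ)) * einv (x.2 i)) : ℝ) : Circle1),
   fun i => x.2 i + 1)

/-- `(x, y)` is a scrambled pair of `F`:
`liminf_{n→∞} D(Fⁿ(x), Fⁿ(y)) = 0` and `limsup_{n→∞} D(Fⁿ(x), Fⁿ(y)) > 0`. -/
def ScrambledPair (x y : Pt) : Prop :=
  liminf (fun n : ℕ => D (F^[n] x) (F^[n] y)) atTop = 0 ∧
  0 < limsup (fun n : ℕ => D (F^[n] x) (F^[n] y)) atTop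

/-! ### Auxiliary lemmas -/

lemma einv_nonneg (a : ℕ∞) : 0 ≤ einv a := by
  unfold einv; positivity

lemma einv_top : einv ⊤ = 0 := by simp [einv]

lemma einv_le (n : ℕ) (a : ℕ∞) (h : ((n+1 : ℕ) : ℕ∞) ≤ a) :
    einv a ≤ ((n+1 : ℕ) : ℝ)⁻¹ := by
  cases a with
  | top => simpa [einv_top] using (by positivity : (0:ℝ) ≤ ((n+1:ℕ):ℝ)⁻¹)
  | coe m =>
    have hm : (n+1 : ℕ) ≤ m := by exact_mod_cast h
    simp only [einv, ENat.toNat_coe]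
    apply inv_anti₀ (by positivity)
    exact_mod_cast hm

lemma einv_le_one (a : ℕ∞) : einv a ≤ 1 := by
  unfold einv
  rcases Nat.eq_zero_or_pos a.toNat with h | h
  · simp [h]
  · rw [inv_le_one_iff₀]; right; exact_mod_cast h

lemma summable_geom_pnat : Summable (fun i : ℕ+ => ((1:ℝ)/2^(i:ℕ))) := by
  have := summable_geometric_two.comp_injective (i := ((↑) : ℕ+ → ℕ)) PNat.coe_injective
  simpa [Function.comp_def] using this

/-- The rotation amount added at step `k`. -/
noncomputable def S (x : Pt) (k : ℕ) : ℝ :=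
  ∑' i : ℕ+, (1 / 2 ^ (i : ℕ)) * einv (x.2 i + k)

lemma summable_S (x : Pt) (k : ℕ) :
    Summable (fun i : ℕ+ => (1 / 2 ^ (i : ℕ)) * einv (x.2 i + k)) := by
  apply Summable.of_nonneg_of_le
    (fun i => mul_nonneg (by positivity) (einv_nonneg _))
    (fun i => ?_) summable_geom_pnat
  calc (1 / 2 ^ (i:ℕ)) * einv (x.2 i + k) ≤ (1 / 2 ^ (i:ℕ)) * 1 := by
        apply mul_le_mul_of_nonneg_left (einv_le_one _) (by positivity)
    _ = 1 / 2 ^ (i:ℕ) := mul_one _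

lemma iter_snd (x : Pt) (n : ℕ) : (F^[n] x).2 = fun i => x.2 i + (n : ℕ∞) := by
  induction n with
  | zero => simp
  | succ n ih =>
    rw [Function.iterate_succ_apply']
    funext i
    show (F^[n] x).2 i + 1 = x.2 i + ((n+1 : ℕ) : ℕ∞)
    rw [ih]
    push_cast
    rw [add_assoc]

lemma iter_fst (x : Pt) (n : ℕ) :
    (F^[n] x).1 = x.1 + (((∑ k ∈ Finset.range n, S x k : ℝ)) : Circle1) := by
  induction n with
  | zero => simp
  | succ n ih =>
    rw [Function.iterate_succ_apply']
    show (F^[n] x).1 + _ = _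
    rw [ih, iter_snd]
    have : (∑' i : ℕ+, (1 / 2 ^ (i : ℕ)) * einv ((fun i => x.2 i + (n : ℕ∞)) i)) = S x n := rfl
    rw [this, Finset.sum_range_succ]
    rw [show ((∑ k ∈ Finset.range n, S x k + S x n : ℝ) : Circle1)
      = ((∑ k ∈ Finset.range n, S x k : ℝ) : Circle1) + ((S x n : ℝ) : Circle1) by norm_cast]
    rw [add_assoc]

/-- Claim 4: let `x, y ∈ Y` and `l ∈ ℕ` be such that `x_i < ∞` and `y_i < ∞` for
`0 < i < l`, and `x_i = y_i = ∞` for all `i ≥ l`. Then `lim_{n→∞} D(Fⁿ(x), Fⁿ(y))` exists;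
in particular `(x, y)` is not a scrambled pair of `F`. -/
theorem claim4_not_scrambled
    (x y : Pt) (hx : x ∈ Y) (hy : y ∈ Y) (l : ℕ+)
    (hfin : ∀ i : ℕ+, i < l → x.2 i ≠ ⊤ ∧ y.2 i ≠ ⊤)
    (hinf : ∀ i : ℕ+, l ≤ i → x.2 i = ⊤ ∧ y.2 i = ⊤) :
    (∃ L : ℝ, Tendsto (fun n : ℕ => D (F^[n] x) (F^[n] y)) atTop (nhds L)) ∧
    ¬ ScrambledPair x y := by
  -- the tail part of D
  set T : ℕ → ℝ := fun n => ∑' i : ℕ+, dE (x.2 i + (n:ℕ∞)) (y.2 i + (n:ℕ∞)) / 2 ^ (i : ℕ)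
    with hT
  -- step 1 : T n → 0
  have hTsummable : ∀ n : ℕ, Summable (fun i : ℕ+ => dE (x.2 i + (n:ℕ∞)) (y.2 i + (n:ℕ∞)) / 2 ^ (i : ℕ)) := by
    intro n
    apply Summable.of_nonneg_of_le (fun i => by unfold dE; positivity) (fun i => ?_)
      (summable_geom_pnat.mul_left 2)
    have h1 : dE (x.2 i + (n:ℕ∞)) (y.2 i + (n:ℕ∞)) ≤ 2 := by
      unfold dE
      have := einv_le_one (x.2 i + (n:ℕ∞)); have := einv_le_one (y.2 i + (n:ℕ∞))
      have := einv_nonneg (x.2 i + (n:ℕ∞)); have := einv_nonneg (y.2 i + (n:ℕ∞))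
      rw [abs_sub_le_iff]; constructor <;> linarith
    rw [div_eq_mul_inv, mul_comm]
    exact le_trans (mul_le_mul_of_nonneg_left h1 (by positivity)) (le_of_eq (by ring))
  have hdE_le : ∀ (n : ℕ) (i : ℕ+), dE (x.2 i + (n:ℕ∞)) (y.2 i + (n:ℕ∞)) ≤ ((n+1:ℕ):ℝ)⁻¹ := by
    intro n i
    have h0 : ((n+1:ℕ):ℕ∞) = 1 + (n:ℕ∞) := by push_cast; ring
    have hxe : einv (x.2 i + (n:ℕ∞)) ≤ ((n+1:ℕ):ℝ)⁻¹ := by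
      apply einv_le
      rw [h0]
      exact add_le_add (hx.1 i) le_rfl
    have hye : einv (y.2 i + (n:ℕ∞)) ≤ ((n+1:ℕ):ℝ)⁻¹ := by
      apply einv_le
      rw [h0]
      exact add_le_add (hy.1 i) le_rfl
    have := einv_nonneg (x.2 i + (n:ℕ∞)); have := einv_nonneg (y.2 i + (n:ℕ∞))
    unfold dE
    rw [abs_sub_le_iff]; constructor <;> linarith
  have hT0 : Tendsto T atTop (nhds 0) := by
    have hub : ∀ n : ℕ, T n ≤ ((n+1:ℕ):ℝ)⁻¹ * ∑' i : ℕ+, ((1:ℝ)/2^(i:ℕ)) := by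
      intro n
      rw [← tsum_mul_left]
      apply Summable.tsum_le_tsum _ (hTsummable n) (summable_geom_pnat.mul_left _)
      intro i
      rw [div_eq_mul_inv, mul_comm]
      exact le_trans (mul_le_mul_of_nonneg_left (hdE_le n i) (by positivity))
        (le_of_eq (by ring))
    have hlo : ∀ n : ℕ, 0 ≤ T n := fun n => tsum_nonneg (fun i => by unfold dE; positivity)
    have hup : Tendsto (fun n : ℕ => ((n+1:ℕ):ℝ)⁻¹ * ∑' i : ℕ+, ((1:ℝ)/2^(i:ℕ)))
        atTop (nhds 0) := by
      rw [show (0:ℝ) = 0 * ∑' i : ℕ+, ((1:ℝ)/2^(i:ℕ)) by ring]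
      apply Tendsto.mul_const
      have : Tendsto (fun n : ℕ => ((n:ℝ)+1)⁻¹) atTop (nhds 0) :=
        tendsto_one_div_add_atTop_nhds_zero_nat.congr (fun n => by rw [one_div])
      exact this.congr (fun n => by push_cast; ring_nf)
    exact squeeze_zero hlo hub hup
  -- step 2 : the defect sequence δ is summable
  set δ : ℕ → ℝ := fun k => S x k - S y k with hδdef
  have hδeq : ∀ k, δ k = ∑ i ∈ Finset.Iio l,
      (1 / 2 ^ (i : ℕ)) * (einv (x.2 i + (k:ℕ∞)) - einv (y.2 i + (k:ℕ∞))) := by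
    intro k
    have : δ k = ∑' i : ℕ+,
        ((1 / 2 ^ (i : ℕ)) * einv (x.2 i + k) - (1 / 2 ^ (i : ℕ)) * einv (y.2 i + k)) := by
      rw [hδdef]
      simp only
      rw [Summable.tsum_sub (summable_S x k) (summable_S y k)]
      rfl
    rw [this, tsum_eq_sum (s := Finset.Iio l)]
    · apply Finset.sum_congr rfl; intro i _; ring
    · intro i hi
      have hl : l ≤ i := le_of_not_gt (by simpa using hi)
      rw [(hinf i hl).1, (hinf i hl).2]
      simp [einv_top]
  have hδsummable : Summable δ := by
    apply (summable_sum (s := Finset.Iio l)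
      (f := fun (i : ℕ+) (k : ℕ) =>
        (1 / 2 ^ (i : ℕ)) * (einv (x.2 i + (k:ℕ∞)) - einv (y.2 i + (k:ℕ∞)))) ?_).congr
      (fun k => (hδeq k).symm)
    intro i hi
    have hi' : i < l := by simpa using hi
    obtain ⟨hxi, hyi⟩ := hfin i hi'
    obtain ⟨a, ha⟩ := WithTop.ne_top_iff_exists.mp hxi
    obtain ⟨b, hb⟩ := WithTop.ne_top_iff_exists.mp hyi
    change ((a:ℕ∞)) = x.2 i at ha; change ((b:ℕ∞)) = y.2 i at hb
    apply Summable.mul_left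
    have heq : ∀ k : ℕ, einv (x.2 i + (k:ℕ∞)) - einv (y.2 i + (k:ℕ∞))
        = ((a+k:ℕ):ℝ)⁻¹ - ((b+k:ℕ):ℝ)⁻¹ := by
      intro k
      rw [← ha, ← hb]
      have h1 : ((a:ℕ∞) + (k:ℕ∞)) = ((a+k : ℕ) : ℕ∞) := by push_cast; ring
      have h2 : ((b:ℕ∞) + (k:ℕ∞)) = ((b+k : ℕ) : ℕ∞) := by push_cast; ring
      have e1 : einv ((a:ℕ∞) + (k:ℕ∞)) = ((a+k:ℕ):ℝ)⁻¹ := by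
        rw [h1]; unfold einv; rw [ENat.toNat_coe]
      have e2 : einv ((b:ℕ∞) + (k:ℕ∞)) = ((b+k:ℕ):ℝ)⁻¹ := by
        rw [h2]; unfold einv; rw [ENat.toNat_coe]
      rw [e1, e2]
    have ha1 : 1 ≤ a := by
      have := hx.1 i; rw [← ha] at this; exact_mod_cast this
    have hb1 : 1 ≤ b := by
      have := hy.1 i; rw [← hb] at this; exact_mod_cast this
    have ha1' : (1:ℝ) ≤ a := by exact_mod_cast ha1
    have hb1' : (1:ℝ) ≤ b := by exact_mod_cast hb1
    apply Summable.congr _ (fun k => (heq k).symm)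
    -- summability of k ↦ (a+k)⁻¹ - (b+k)⁻¹
    have hbase : Summable (fun k : ℕ => ((a:ℝ)+(b:ℝ)) * (((k:ℝ)+1)^2)⁻¹) := by
      apply Summable.mul_left
      have h2 : Summable (fun k : ℕ => (((k:ℝ)) ^ 2)⁻¹) :=
        Real.summable_nat_pow_inv.mpr one_lt_two
      have := (summable_nat_add_iff 1).mpr h2
      exact this.congr (fun k => by push_cast; ring_nf)
    apply Summable.of_norm_bounded hbase
    intro k
    have hk0 : (0:ℝ) ≤ (k:ℝ) := Nat.cast_nonneg k
    have hA1 : ((k:ℝ)+1) ≤ (a:ℝ) + k := by linarith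
    have hB1 : ((k:ℝ)+1) ≤ (b:ℝ) + k := by linarith
    have hA : (0:ℝ) < (a:ℝ) + k := by linarith
    have hB : (0:ℝ) < (b:ℝ) + k := by linarith
    have key : ((a+k:ℕ):ℝ)⁻¹ - ((b+k:ℕ):ℝ)⁻¹
        = ((b:ℝ) - a) / (((a:ℝ)+k) * ((b:ℝ)+k)) := by
      push_cast
      rw [inv_sub_inv (by linarith) (by linarith)]
      ring_nf
    rw [Real.norm_eq_abs, key, abs_div, abs_of_pos (mul_pos hA hB), div_eq_mul_inv]
    have hnum : |(b:ℝ) - a| ≤ (a:ℝ) + b := by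
      rw [abs_sub_le_iff]
      exact ⟨by linarith, by linarith⟩
    have hden : ((((a:ℝ)+k) * ((b:ℝ)+k))⁻¹) ≤ ((((k:ℝ)+1)^2)⁻¹) := by
      apply inv_anti₀ (by positivity)
      calc ((k:ℝ)+1)^2 = ((k:ℝ)+1) * ((k:ℝ)+1) := sq _
        _ ≤ ((a:ℝ)+k) * ((b:ℝ)+k) := by
          apply mul_le_mul hA1 hB1 (by linarith) (by linarith)
    exact mul_le_mul hnum hden (inv_nonneg.2 (le_of_lt (mul_pos hA hB))) (by positivity)
  -- step 3 : identify D (F^[n] x) (F^[n] y)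
  have hkey : ∀ n : ℕ, D (F^[n] x) (F^[n] y)
      = dist (x.1 + (((∑ k ∈ Finset.range n, δ k : ℝ)) : Circle1)) y.1 + T n := by
    intro n
    unfold D
    rw [iter_fst x n, iter_fst y n, iter_snd x n, iter_snd y n]
    congr 1
    have hsum : (∑ k ∈ Finset.range n, δ k : ℝ)
        = (∑ k ∈ Finset.range n, S x k) - (∑ k ∈ Finset.range n, S y k) := by
      rw [hδdef, Finset.sum_sub_distrib]
    have hc : ∀ (s t : ℝ), ((s+t:ℝ) : Circle1) = (s:Circle1) + (t:Circle1) :=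
      fun s t => by norm_cast
    have hAB : (∑ k ∈ Finset.range n, δ k) + (∑ k ∈ Finset.range n, S y k)
        = ∑ k ∈ Finset.range n, S x k := by rw [hsum]; ring
    have hcast : x.1 + (((∑ k ∈ Finset.range n, S x k : ℝ)) : Circle1)
        = (x.1 + (((∑ k ∈ Finset.range n, δ k : ℝ)) : Circle1))
          + (((∑ k ∈ Finset.range n, S y k : ℝ)) : Circle1) := by
      rw [add_assoc, ← hc, hAB]
    rw [hcast]
    exact dist_add_right _ _ _
  -- step 4 : convergence
  set Δ : ℝ := ∑' k, δ k with hΔdef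
  have hΔ : Tendsto (fun n => ∑ k ∈ Finset.range n, δ k) atTop (nhds Δ) :=
    hδsummable.hasSum.tendsto_sum_nat
  have hcont : Continuous (fun t : ℝ => dist (x.1 + ((t : ℝ) : Circle1)) y.1) := by
    apply Continuous.dist _ continuous_const
    exact continuous_const.add continuous_quotient_mk'
  have hcirc : Tendsto (fun n : ℕ => dist (x.1 + (((∑ k ∈ Finset.range n, δ k : ℝ)) : Circle1)) y.1)
      atTop (nhds (dist (x.1 + ((Δ : ℝ) : Circle1)) y.1)) :=
    (hcont.tendsto Δ).comp hΔ
  have hlim : Tendsto (fun n : ℕ => D (F^[n] x) (F^[n] y)) atTop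
      (nhds (dist (x.1 + ((Δ : ℝ) : Circle1)) y.1 + 0)) := by
    apply Tendsto.congr (fun n => (hkey n).symm)
    exact hcirc.add hT0
  set L : ℝ := dist (x.1 + ((Δ : ℝ) : Circle1)) y.1 + 0 with hLdef
  refine ⟨⟨L, hlim⟩, ?_⟩
  rintro ⟨h1, h2⟩
  rw [hlim.liminf_eq] at h1
  rw [hlim.limsup_eq] at h2
  rw [h1] at h2
  exact lt_irrefl 0 h2

end
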